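/- Let α ∈ T_n and β ∈ T_m, and consider the twin ι^R(α)·ι^L(β) ∈ T_{n+m} formed by placing β to the right of α (shifting generators of β by n and including α unchanged). Then f_{n+m}(ι^R(α)·ι^L(β)) = 0. -/

import Mathlib

open Matrix Polynomial

/-- Deformed Tits matrix `V_i` (generator index `i` is 1-based, `1 ≤ i ≤ m`):
the identity `m × m` matrix except column `i`, which has `-1` on the diagonal,
`y` in row `i-1` and `x` in row `i+1`. -/
def Vmat {R : Type*} [CommRing R] (x y : R) (m i : ℕ) : Matrix (Fin m) (Fin m) R :=
  Matrix.of fun r c =>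
    if (c : ℕ) + 1 = i then
      if (r : ℕ) + 1 = i then -1
      else if (r : ℕ) + 2 = i then y
      else if (r : ℕ) = i then x
      else 0
    else if r = c then 1 else 0

/-- Relators of the twin group with `m` generators (the twin group on `m+1` strands). -/
def twinRels (m : ℕ) : Set (FreeGroup (Fin m)) :=
  {r | (∃ i, r = FreeGroup.of i * FreeGroup.of i) ∨
       (∃ i j : Fin m, (i : ℕ) + 1 < (j : ℕ) ∧
          r = FreeGroup.of i * FreeGroup.of j * (FreeGroup.of i)⁻¹ * (FreeGroup.of j)⁻¹)}

/-- The twin group `T_{m+1}` on `m+1` strands, with `m` generators `t_1, …, t_m`;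
the generator `t_{i+1}` is `TwinGroup.of i` for `i : Fin m`. -/
def TwinGroup (m : ℕ) : Type := PresentedGroup (twinRels m)

instance (m : ℕ) : Group (TwinGroup m) :=
  inferInstanceAs (Group (PresentedGroup (twinRels m)))

/-- The generator `t_{i+1}` of the twin group. -/
def TwinGroup.of {m : ℕ} (i : Fin m) : TwinGroup m := PresentedGroup.of i

/-- The field `ℤ(x)` of rational functions over `ℤ`. -/
noncomputable abbrev Zx : Type := FractionRing (Polynomial ℤ)

/-- The element `x` of `ℤ(x)`. -/
noncomputable def xx : Zx := algebraMap (Polynomial ℤ) Zx Polynomial.X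

/-- `U_n(1/x)` as an element of `ℤ(x)`, `U_n` the `n`-th Chebyshev polynomial
of the second kind. -/
noncomputable def Ux (n : ℕ) : Zx := Polynomial.eval xx⁻¹ (Polynomial.Chebyshev.U Zx n)

/-- Proposition 4.14 (key step): for `α ∈ T_n` and `β ∈ T_m`
(`n = a+1`, `m = b+1`, so `T_{n+m} = TwinGroup (a+b+1)`), the split twin
`ι^R(α)·ι^L(β)` (with `ι^R(t_i) = t_i` and `ι^L(t_i) = t_{i+n}`) satisfies
`f_{n+m}(ι^R(α)·ι^L(β)) = 0`. -/
theorem stmt18 (a b : ℕ) (α : TwinGroup a) (β : TwinGroup b)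
    (ψ : TwinGroup (a+b+1) →* Matrix (Fin (a+b+1)) (Fin (a+b+1)) Zx)
    (hψ : ∀ k : Fin (a+b+1), ψ (TwinGroup.of k) = Vmat xx xx (a+b+1) ((k : ℕ) + 1))
    (ιR : TwinGroup a →* TwinGroup (a+b+1))
    (hιR : ∀ k : Fin a, ιR (TwinGroup.of k)
        = TwinGroup.of (⟨(k : ℕ), by have := k.isLt; omega⟩ : Fin (a+b+1)))
    (ιL : TwinGroup b →* TwinGroup (a+b+1))
    (hιL : ∀ k : Fin b, ιL (TwinGroup.of k)
        = TwinGroup.of (⟨(k : ℕ) + a + 1, by have := k.isLt; omega⟩ : Fin (a+b+1))) :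
    Matrix.det (ψ (ιR α * ιL β) - 1) / ((-xx)^(a+b+1) * Ux (a+b+1)) = 0 := by
  set a0 : Fin (a+b+1) := ⟨a, by omega⟩ with ha0
  set v : Fin (a+b+1) → Zx := Pi.single a0 1 with hv
  -- subgroup of elements whose image fixes v
  set H : Subgroup (TwinGroup (a+b+1)) :=
    { carrier := {g | (ψ g) *ᵥ v = v}
      one_mem' := by simp
      mul_mem' := by
        intro g h hg hh
        simp only [Set.mem_setOf_eq] at *
        rw [_root_.map_mul ψ g h, ← Matrix.mulVec_mulVec, hh, hg]
      inv_mem' := by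
        intro g hg
        simp only [Set.mem_setOf_eq] at *
        conv_lhs => rw [← hg]
        rw [Matrix.mulVec_mulVec, ← _root_.map_mul ψ, inv_mul_cancel, _root_.map_one ψ, Matrix.one_mulVec] }
    with hH
  have key : ∀ (i : Fin (a+b+1)), (i : ℕ) ≠ a → Vmat xx xx (a+b+1) ((i:ℕ)+1) *ᵥ v = v := by
    intro i hi
    rw [hv, Matrix.mulVec_single_one]
    funext r
    simp only [Vmat, Matrix.col_apply, Matrix.of_apply, ha0, mul_one]
    rw [if_neg (by simpa using hi.symm)]
    rcases eq_or_ne r a0 with h | h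
    · rw [if_pos h, h, Pi.single_eq_same]
    · rw [if_neg h, Pi.single_eq_of_ne h]
  have hR : ∀ γ : TwinGroup a, ιR γ ∈ H := by
    have : (H.comap ιR) = ⊤ := by
      rw [eq_top_iff, ← (show Subgroup.closure (Set.range (TwinGroup.of : Fin a → TwinGroup a)) = ⊤ from PresentedGroup.closure_range_of (twinRels a)), Subgroup.closure_le]
      rintro _ ⟨k, rfl⟩
      show ιR (TwinGroup.of k) ∈ H
      rw [hιR k]
      show ψ _ *ᵥ v = v
      rw [hψ]
      exact key _ (by have := k.isLt; simp; omega)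
    intro γ
    have := this ▸ Subgroup.mem_top γ
    exact this
  have hL : ∀ γ : TwinGroup b, ιL γ ∈ H := by
    have : (H.comap ιL) = ⊤ := by
      rw [eq_top_iff, ← (show Subgroup.closure (Set.range (TwinGroup.of : Fin b → TwinGroup b)) = ⊤ from PresentedGroup.closure_range_of (twinRels b)), Subgroup.closure_le]
      rintro _ ⟨k, rfl⟩
      show ιL (TwinGroup.of k) ∈ H
      rw [hιL k]
      show ψ _ *ᵥ v = v
      rw [hψ]
      exact key _ (by simp; omega)
    intro γ
    have := this ▸ Subgroup.mem_top γ
    exact this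
  have hmem : ψ (ιR α * ιL β) *ᵥ v = v := H.mul_mem (hR α) (hL β)
  have hdet : Matrix.det (ψ (ιR α * ιL β) - 1) = 0 := by
    apply Matrix.det_eq_zero_of_column_eq_zero a0
    intro i
    have := congrFun hmem i
    simp only [hv, Matrix.mulVec_single_one, Matrix.col_apply, mul_one] at this
    simp only [Matrix.sub_apply, this, Matrix.one_apply]
    rcases eq_or_ne i a0 with h | h
    · subst h; rw [Pi.single_eq_same]; simp
    · simp [h, Pi.single_eq_of_ne h, this]
  rw [hdet, zero_div]
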